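/- Conversely, if two vehicles satisfy the time-gap policy s_i(t) = s_{i-1}(t - τ_i) for all t, with differentiable positions, and each vehicle's speed is a function of its position (v_i(t) = v_i^s(s_i(t))), then the two position-parameterized speed profiles agree: v_i^s(z) = v_{i-1}^s(z) for all z in the range of s_i. -/

import Mathlib

/-- If two vehicles satisfy the time-gap policy for all times, with speeds given as
functions of position, then their position-parameterized speed profiles agree on the
range of the follower's position map. -/
theorem time_gap_implies_same_space_profile
    (sPrev sCur vPrev vCur : ℝ → ℝ) (vsPrev vsCur : ℝ → ℝ) (τ : ℝ) (hτ : 0 < τ)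
    (hdPrev : ∀ t, HasDerivAt sPrev (vPrev t) t)
    (hdCur : ∀ t, HasDerivAt sCur (vCur t) t)
    (hprofPrev : ∀ t, vPrev t = vsPrev (sPrev t))
    (hprofCur : ∀ t, vCur t = vsCur (sCur t))
    (hgap : ∀ t, sCur t = sPrev (t - τ)) :
    ∀ z ∈ Set.range sCur, vsCur z = vsPrev z := by
  rintro z ⟨t, rfl⟩
  have h1 : HasDerivAt (fun u : ℝ => sPrev (u - τ)) (vPrev (t - τ)) t := by
    have := (hdPrev (t - τ)).comp t ((hasDerivAt_id t).sub_const τ)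
    simpa [Function.comp_def] using this
  have h2 : HasDerivAt sCur (vPrev (t - τ)) t := by
    have : sCur = fun u => sPrev (u - τ) := funext hgap
    rw [this]; exact h1
  have heq : vCur t = vPrev (t - τ) := h2.unique (hdCur t) ▸ rfl
  calc vsCur (sCur t) = vCur t := (hprofCur t).symm
    _ = vPrev (t - τ) := heq
    _ = vsPrev (sPrev (t - τ)) := hprofPrev _
    _ = vsPrev (sCur t) := by rw [hgap]
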